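/- In the coordinate ARH(1) estimation model, the real random variables Z_n := Σ_{j=1}^{k_n} (ρ_j − ρ̂_{n,j})² + Σ_{j=k_n+1}^{∞} ρ_j² (n ≥ 2), which equal the squared Hilbert–Schmidt norm ‖ρ − ρ̂_{k_n}‖²_{S(H)}, converge to 0 in probability as n → ∞; that is, for every ε > 0, lim_{n→∞} P(Z_n > ε) = 0. -/

import Mathlib

open MeasureTheory Filter

/-- The componentwise moment-based estimator
`ρ̂_{n,j} = (n/(n-1)) · (Σ_{i=0}^{n-2} η_j(i) η_j(i+1)) / (Σ_{i=0}^{n-1} η_j(i)²)`. -/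
noncomputable def rhoHat {Ω : Type*} (η : ℕ → ℕ → Ω → ℝ) (n j : ℕ) (ω : Ω) : ℝ :=
  (n : ℝ) / ((n : ℝ) - 1) *
    (∑ i ∈ Finset.range (n - 1), η j i ω * η j (i + 1) ω) /
    ∑ i ∈ Finset.range n, η j i ω ^ 2

/-- Auxiliary: the normalized denominator deviation `1 - (1/n) Σ η²`. -/
noncomputable def Ufun {Ω : Type*} (η : ℕ → ℕ → Ω → ℝ) (n j : ℕ) (ω : Ω) : ℝ :=
  1 - 1 / (n : ℝ) * ∑ i ∈ Finset.range n, η j i ω ^ 2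

/-- Auxiliary: the numerator deviation `ρ_j - (1/(n-1)) Σ η(i)η(i+1)`. -/
noncomputable def Gfun {Ω : Type*} (ρ : ℕ → ℝ) (η : ℕ → ℕ → Ω → ℝ) (n j : ℕ) (ω : Ω) : ℝ :=
  ρ j - 1 / ((n : ℝ) - 1) * ∑ i ∈ Finset.range (n - 1), η j i ω * η j (i + 1) ω

/-- Auxiliary: truncated squared error, integrable by construction. -/
noncomputable def hfun {Ω : Type*} (ρ : ℕ → ℝ) (η : ℕ → ℕ → Ω → ℝ) (n j : ℕ) (ω : Ω) : ℝ :=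
  min ((ρ j - rhoHat η n j ω) ^ 2)
    (8 * (ρ j ^ 2 * (Ufun η n j ω) ^ 2 + (Gfun ρ η n j ω) ^ 2))

/-- Key deterministic algebra: when the empirical denominator is close to `1`,
the squared estimation error is controlled by the two A4 deviations. -/
lemma key_alg (n : ℕ) (hn : 2 ≤ n) (ρj A B : ℝ)
    (hE : (1 - 1/(n:ℝ) * B)^2 ≤ 1/4) :
    (ρj - (n:ℝ)/((n:ℝ)-1) * A / B)^2
      ≤ 8*(ρj^2*(1 - 1/(n:ℝ)*B)^2 + (ρj - 1/((n:ℝ)-1)*A)^2) := by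
  have hn1 : (1:ℝ) ≤ (n:ℝ) - 1 := by
    have : (2:ℝ) ≤ (n:ℝ) := by exact_mod_cast hn
    linarith
  have hnpos : (0:ℝ) < n := by linarith
  set D : ℝ := 1/(n:ℝ) * B with hD
  have hDhalf : (1:ℝ)/2 ≤ D := by nlinarith [sq_nonneg (1 - D)]
  have hBpos : 0 < B := by
    have : B = n * D := by rw [hD, ← mul_assoc, mul_one_div_cancel hnpos.ne', one_mul]
    nlinarith
  set r : ℝ := (n:ℝ)/((n:ℝ)-1) * A / B with hr
  have hrD : r * D = A / ((n:ℝ) - 1) := by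
    rw [hr, hD]; field_simp
  set G : ℝ := ρj - 1/((n:ℝ)-1)*A with hG
  have h1 : (ρj - r) * D = G - ρj * (1 - D) := by
    have : (1:ℝ)/((n:ℝ)-1)*A = A/((n:ℝ)-1) := by ring
    rw [hG, this, ← hrD]; ring
  have h2 : (ρj - r)^2 * D^2 ≤ 2*G^2 + 2*(ρj^2*(1-D)^2) := by
    have := sq_nonneg (G + ρj*(1-D))
    have hx : (ρj - r)^2 * D^2 = (G - ρj*(1-D))^2 := by
      rw [← h1]; ring
    nlinarith
  have h3 : (ρj - r)^2 ≤ 4 * ((ρj - r)^2 * D^2) := by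
    have := mul_nonneg (sq_nonneg (ρj - r)) (by nlinarith : (0:ℝ) ≤ 4*D^2 - 1)
    nlinarith
  linarith

/-- Markov's inequality with a strict-level set, in `ℝ≥0∞` form. -/
lemma markov_aux {Ω : Type*} [MeasurableSpace Ω] (P : Measure Ω) [IsProbabilityMeasure P]
    (f : Ω → ℝ) (hnn : ∀ ω, 0 ≤ f ω) (hint : Integrable f P) {c : ℝ} (hc : 0 < c) :
    P {ω | c < f ω} ≤ ENNReal.ofReal (c⁻¹ * ∫ ω, f ω ∂P) := by
  have h1 : P {ω | c < f ω} ≤ P {ω | c ≤ f ω} :=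
    measure_mono (fun ω h => le_of_lt (Set.mem_setOf_eq ▸ h))
  have h2 := mul_meas_ge_le_integral_of_nonneg (ae_of_all P hnn) hint c
  have h3 : (P {ω | c ≤ f ω}).toReal ≤ c⁻¹ * ∫ ω, f ω ∂P := by
    rw [inv_mul_eq_div, le_div_iff₀ hc]
    simp only [measureReal_def] at h2
    linarith [h2]
  calc P {ω | c < f ω} ≤ P {ω | c ≤ f ω} := h1
    _ = ENNReal.ofReal ((P {ω | c ≤ f ω}).toReal) :=
        (ENNReal.ofReal_toReal (measure_ne_top _ _)).symm
    _ ≤ _ := ENNReal.ofReal_le_ofReal h3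

/-- For a nonincreasing nonnegative summable sequence, `n · f n → 0`. -/
lemma nat_mul_tendsto_zero (f : ℕ → ℝ) (hnn : ∀ j, 0 ≤ f j)
    (hmono : ∀ i j, i ≤ j → f j ≤ f i) (hsum : Summable f) :
    Tendsto (fun j : ℕ => (j:ℝ) * f j) atTop (nhds 0) := by
  rw [Metric.tendsto_atTop]
  intro ε hε
  have htail : Tendsto (fun i : ℕ => ∑' k, f (k + i)) atTop (nhds 0) :=
    tendsto_sum_nat_add f
  obtain ⟨N, hN⟩ := (Metric.tendsto_atTop.1 htail) (ε/2) (by linarith)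
  have hf0 : Tendsto f atTop (nhds 0) := hsum.tendsto_atTop_zero
  obtain ⟨N1, hN1⟩ := (Metric.tendsto_atTop.1 hf0) (ε/(2*(N+1))) (by positivity)
  refine ⟨max N N1, fun n hn => ?_⟩
  have hnN : N ≤ n := le_trans (le_max_left _ _) hn
  have hnN1 : N1 ≤ n := le_trans (le_max_right _ _) hn
  have hsum' : Summable (fun k => f (k + N)) := (summable_nat_add_iff N).2 hsum
  have hb : ((n:ℝ) - N) * f n ≤ ∑' k, f (k + N) := by
    have : ∑ i ∈ Finset.range (n - N), f (i + N) ≤ ∑' k, f (k + N) :=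
      Summable.sum_le_tsum _ (fun i _ => hnn _) hsum'
    have hlow : ((n:ℝ) - N) * f n ≤ ∑ i ∈ Finset.range (n - N), f (i + N) := by
      have : ∑ i ∈ Finset.range (n - N), f n ≤ ∑ i ∈ Finset.range (n - N), f (i + N) :=
        Finset.sum_le_sum (fun i hi => hmono _ _ (by
          have := Finset.mem_range.1 hi; omega))
      simpa [Finset.sum_const, Nat.cast_sub hnN] using this
    linarith
  have htail' : ∑' k, f (k + N) < ε/2 := by
    have := hN N le_rfl
    rw [Real.dist_eq, sub_zero] at this
    calc ∑' k, f (k + N) ≤ |∑' k, f (k + N)| := le_abs_self _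
      _ < ε/2 := this
  have hfn : f n < ε/(2*(N+1)) := by
    have := hN1 n hnN1
    rw [Real.dist_eq, sub_zero] at this
    calc f n ≤ |f n| := le_abs_self _
      _ < _ := this
  rw [Real.dist_eq, sub_zero, abs_of_nonneg (mul_nonneg (Nat.cast_nonneg n) (hnn n))]
  have : (n:ℝ) * f n = ((n:ℝ) - N) * f n + N * f n := by ring
  rw [this]
  have h4 : (N:ℝ) * f n ≤ (N+1) * (ε/(2*(N+1))) := by
    have := mul_le_mul_of_nonneg_left hfn.le (by positivity : (0:ℝ) ≤ (N:ℝ))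
    nlinarith [hnn n]
  have h5 : ((N:ℝ)+1) * (ε/(2*(N+1))) = ε/2 := by field_simp
  linarith

/-- Under A3 and summability of `C`, the truncation parameter satisfies `k n / n → 0`. -/
lemma kn_div_tendsto_zero (C : ℕ → ℝ) (hCpos : ∀ j, 1 ≤ j → 0 < C j)
    (hCmono : ∀ i j : ℕ, 1 ≤ i → i ≤ j → C j ≤ C i)
    (hCsum : Summable fun j : ℕ => C (j + 1))
    (k : ℕ → ℕ) (hk : Tendsto k atTop atTop)
    (hA3 : Tendsto (fun n : ℕ => (n : ℝ) * C (k n) ^ 2) atTop atTop) :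
    Tendsto (fun n : ℕ => (k n : ℝ) / n) atTop (nhds 0) := by
  have T1 : Tendsto (fun j : ℕ => (j:ℝ) * C (j+1)) atTop (nhds 0) :=
    nat_mul_tendsto_zero _ (fun j => (hCpos (j+1) (by omega)).le)
      (fun i j hij => hCmono (i+1) (j+1) (by omega) (by omega)) hCsum
  have T0 : Tendsto (fun j : ℕ => C (j+1)) atTop (nhds 0) := hCsum.tendsto_atTop_zero
  have T2 : Tendsto (fun j : ℕ => ((j:ℝ)+1) * C (j+1)) atTop (nhds 0) := by
    have := T1.add T0
    simpa [add_mul] using this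
  have T3 : Tendsto (fun j : ℕ => (j:ℝ) * C j) atTop (nhds 0) := by
    rw [← tendsto_add_atTop_iff_nat 1]
    simpa [Nat.cast_add] using T2
  have T4 : Tendsto (fun n : ℕ => (k n : ℝ) * C (k n)) atTop (nhds 0) := T3.comp hk
  have T5 : Tendsto (fun n : ℕ => ((k n : ℝ) * C (k n))^2) atTop (nhds 0) := by
    have := T4.mul T4
    simpa [sq] using this
  have T6 : Tendsto (fun n : ℕ => ((k n : ℝ) * C (k n))^2 / ((n:ℝ) * C (k n)^2))
      atTop (nhds 0) := T5.div_atTop hA3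
  refine squeeze_zero' ?_ ?_ T6
  · filter_upwards [eventually_ge_atTop 1] with n hn
    positivity
  · filter_upwards [hk.eventually_ge_atTop 1, eventually_ge_atTop 1] with n hkn hn
    have hC : C (k n) ≠ 0 := (hCpos _ hkn).ne'
    have hnp : (0:ℝ) < n := by exact_mod_cast hn
    have h1 : ((k n : ℝ) * C (k n))^2 / ((n:ℝ) * C (k n)^2) = (k n:ℝ)^2 / n := by
      field_simp
    rw [h1]
    have h2 : (k n : ℝ) ≤ (k n:ℝ)^2 := by
      have : (1:ℝ) ≤ (k n : ℝ) := by exact_mod_cast hkn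
      nlinarith
    gcongr

/-- in the coordinate ARH(1) estimation model, the squared Hilbert–Schmidt
norm `Z_n = Σ_{j=1}^{k_n} (ρ_j − ρ̂_{n,j})² + Σ_{j>k_n} ρ_j²` converges to `0` in
probability. -/
theorem stmt10 {Ω : Type*} [MeasurableSpace Ω] (P : Measure Ω) [IsProbabilityMeasure P]
    (C : ℕ → ℝ) (hCpos : ∀ j, 1 ≤ j → 0 < C j)
    (hCmono : ∀ i j : ℕ, 1 ≤ i → i ≤ j → C j ≤ C i)
    (hCsum : Summable fun j : ℕ => C (j + 1))
    (ρ : ℕ → ℝ) (hρ2 : Summable fun j : ℕ => ρ (j + 1) ^ 2)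
    (η : ℕ → ℕ → Ω → ℝ) (hηm : ∀ j i, Measurable (η j i))
    (hpos : ∀ j n : ℕ, 1 ≤ j → 1 ≤ n →
      ∀ᵐ ω ∂P, 0 < ∑ i ∈ Finset.range n, η j i ω ^ 2)
    (K1 K2 : ℕ → ℝ) (hK1 : ∀ j, 0 ≤ K1 j) (hK2 : ∀ j, 0 ≤ K2 j)
    (S : ℝ) (hS : ∀ j, 1 ≤ j → K1 j + K2 j ≤ S)
    (hA41int : ∀ n j : ℕ, 2 ≤ n → 1 ≤ j → Integrable
      (fun ω => (1 - 1 / (n : ℝ) * ∑ i ∈ Finset.range n, η j i ω ^ 2) ^ 2) P)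
    (hA41 : ∀ n j : ℕ, 2 ≤ n → 1 ≤ j →
      ∫ ω, (1 - 1 / (n : ℝ) * ∑ i ∈ Finset.range n, η j i ω ^ 2) ^ 2 ∂P ≤ K1 j / n)
    (hA42int : ∀ n j : ℕ, 2 ≤ n → 1 ≤ j → Integrable
      (fun ω => (ρ j - 1 / ((n : ℝ) - 1) *
        ∑ i ∈ Finset.range (n - 1), η j i ω * η j (i + 1) ω) ^ 2) P)
    (hA42 : ∀ n j : ℕ, 2 ≤ n → 1 ≤ j →
      ∫ ω, (ρ j - 1 / ((n : ℝ) - 1) *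
        ∑ i ∈ Finset.range (n - 1), η j i ω * η j (i + 1) ω) ^ 2 ∂P ≤ K2 j / n)
    (k : ℕ → ℕ) (hk : Tendsto k atTop atTop)
    (hA3 : Tendsto (fun n : ℕ => (n : ℝ) * C (k n) ^ 2) atTop atTop) :
    ∀ ε : ℝ, 0 < ε →
      Tendsto (fun n : ℕ =>
          P {ω | ε < (∑ j ∈ Finset.Icc 1 (k n), (ρ j - rhoHat η n j ω) ^ 2)
                    + ∑' j : ℕ, ρ (k n + 1 + j) ^ 2})
        atTop (nhds 0) := by
  intro ε hε
  -- bound on ρ j ^ 2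
  obtain ⟨M, hMmem⟩ : BddAbove (Set.range fun j : ℕ => ρ (j+1)^2) :=
    hρ2.tendsto_atTop_zero.bddAbove_range
  have hM : ∀ j : ℕ, 1 ≤ j → ρ j ^ 2 ≤ M := by
    intro j hj
    have := hMmem (Set.mem_range_self (j - 1))
    simpa [Nat.sub_add_cancel hj] using this
  have hM0 : (0:ℝ) ≤ M := le_trans (sq_nonneg (ρ 1)) (hM 1 le_rfl)
  have hS0 : (0:ℝ) ≤ S := le_trans (add_nonneg (hK1 1) (hK2 1)) (hS 1 le_rfl)
  have hK1S : ∀ j, 1 ≤ j → K1 j ≤ S := fun j hj => by linarith [hK2 j, hS j hj]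
  have hK2S : ∀ j, 1 ≤ j → K2 j ≤ S := fun j hj => by linarith [hK1 j, hS j hj]
  -- measurability
  have hUm : ∀ n j : ℕ, Measurable (fun ω => Ufun η n j ω) := by
    intro n j
    exact (measurable_const.sub
      (measurable_const.mul (Finset.measurable_sum _ fun i _ => (hηm j i).pow_const 2)))
  have hGm : ∀ n j : ℕ, Measurable (fun ω => Gfun ρ η n j ω) := by
    intro n j
    exact measurable_const.sub
      (measurable_const.mul (Finset.measurable_sum _ fun i _ => (hηm j i).mul (hηm j (i+1))))
  have hrm : ∀ n j : ℕ, Measurable (fun ω => rhoHat η n j ω) := by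
    intro n j
    exact ((measurable_const.mul
        (Finset.measurable_sum _ fun i _ => (hηm j i).mul (hηm j (i+1)))).div
      (Finset.measurable_sum _ fun i _ => (hηm j i).pow_const 2))
  have hhm : ∀ n j : ℕ, Measurable (fun ω => hfun ρ η n j ω) := by
    intro n j
    exact ((measurable_const.sub (hrm n j)).pow_const 2).min
      (measurable_const.mul
        (((hUm n j).pow_const 2).const_mul _ |>.add ((hGm n j).pow_const 2)))
  -- nonneg
  have hhnn : ∀ n j : ℕ, ∀ ω, 0 ≤ hfun ρ η n j ω := fun n j ω =>
    le_min (sq_nonneg _) (by positivity)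
  -- integrability of the dominating function and of hfun
  have hgint : ∀ n j : ℕ, 2 ≤ n → 1 ≤ j → Integrable
      (fun ω => 8 * (ρ j ^ 2 * (Ufun η n j ω)^2 + (Gfun ρ η n j ω)^2)) P := by
    intro n j hn hj
    exact (((hA41int n j hn hj).const_mul (ρ j ^ 2)).add (hA42int n j hn hj)).const_mul 8
  have hhint : ∀ n j : ℕ, 2 ≤ n → 1 ≤ j → Integrable (fun ω => hfun ρ η n j ω) P := by
    intro n j hn hj
    refine Integrable.mono' (hgint n j hn hj) (hhm n j).aestronglyMeasurable
      (ae_of_all P fun ω => ?_)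
    rw [Real.norm_eq_abs, abs_of_nonneg (hhnn n j ω)]
    exact min_le_right _ _
  -- integral bound on hfun
  have hhIb : ∀ n j : ℕ, 2 ≤ n → 1 ≤ j →
      ∫ ω, hfun ρ η n j ω ∂P ≤ 8 * (M + 1) * S / n := by
    intro n j hn hj
    have hnp : (0:ℝ) < n := by
      have : (2:ℝ) ≤ (n:ℝ) := by exact_mod_cast hn
      linarith
    have step1 : ∫ ω, hfun ρ η n j ω ∂P ≤
        ∫ ω, 8 * (ρ j ^ 2 * (Ufun η n j ω)^2 + (Gfun ρ η n j ω)^2) ∂P :=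
      integral_mono (hhint n j hn hj) (hgint n j hn hj) (fun ω => min_le_right _ _)
    have step2 : ∫ ω, 8 * (ρ j ^ 2 * (Ufun η n j ω)^2 + (Gfun ρ η n j ω)^2) ∂P
        = 8 * (ρ j ^ 2 * ∫ ω, (Ufun η n j ω)^2 ∂P + ∫ ω, (Gfun ρ η n j ω)^2 ∂P) := by
      have hUint : Integrable (fun ω => (Ufun η n j ω)^2) P := hA41int n j hn hj
      have hGint : Integrable (fun ω => (Gfun ρ η n j ω)^2) P := hA42int n j hn hj
      rw [integral_const_mul, integral_add (hUint.const_mul _) hGint, integral_const_mul]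
    have hU2 : ∫ ω, (Ufun η n j ω)^2 ∂P ≤ S / n :=
      le_trans (hA41 n j hn hj) (div_le_div_of_nonneg_right (hK1S j hj) hnp.le)
    have hG2 : ∫ ω, (Gfun ρ η n j ω)^2 ∂P ≤ S / n :=
      le_trans (hA42 n j hn hj) (div_le_div_of_nonneg_right (hK2S j hj) hnp.le)
    have hU2nn : 0 ≤ ∫ ω, (Ufun η n j ω)^2 ∂P :=
      integral_nonneg fun ω => sq_nonneg _
    have hfinal : 8 * (ρ j ^ 2 * ∫ ω, (Ufun η n j ω)^2 ∂P + ∫ ω, (Gfun ρ η n j ω)^2 ∂P)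
        ≤ 8 * (M + 1) * S / n := by
      have h1 : ρ j ^ 2 * ∫ ω, (Ufun η n j ω)^2 ∂P ≤ M * (S / n) :=
        mul_le_mul (hM j hj) hU2 hU2nn hM0
      have h2 : 8 * (M * (S/n) + S/n) = 8 * (M+1) * S / n := by ring
      linarith
    linarith
  -- the main eventual bound
  have key : ∀ n : ℕ, 2 ≤ n → (∑' j, ρ (k n + 1 + j)^2) ≤ ε/2 →
      P {ω | ε < (∑ j ∈ Finset.Icc 1 (k n), (ρ j - rhoHat η n j ω) ^ 2)
                    + ∑' j : ℕ, ρ (k n + 1 + j) ^ 2}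
        ≤ ENNReal.ofReal (4*S*((k n : ℝ)/n))
          + ENNReal.ofReal ((2/ε)*(8*(M+1)*S)*((k n : ℝ)/n)) := by
    intro n hn htail
    have hnp : (0:ℝ) < n := by
      have : (2:ℝ) ≤ (n:ℝ) := by exact_mod_cast hn
      linarith
    set s := Finset.Icc 1 (k n) with hs
    have hjmem : ∀ j ∈ s, 1 ≤ j := fun j hj => (Finset.mem_Icc.1 hj).1
    -- set inclusion
    have hsub : {ω | ε < (∑ j ∈ s, (ρ j - rhoHat η n j ω) ^ 2)
                    + ∑' j : ℕ, ρ (k n + 1 + j) ^ 2}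
        ⊆ (⋃ j ∈ s, {ω | (1:ℝ)/4 < (Ufun η n j ω)^2})
          ∪ {ω | ε/2 < ∑ j ∈ s, hfun ρ η n j ω} := by
      intro ω hω
      simp only [Set.mem_setOf_eq] at hω
      by_cases hc : ∀ j ∈ s, (Ufun η n j ω)^2 ≤ 1/4
      · right
        have heq : ∀ j ∈ s, hfun ρ η n j ω = (ρ j - rhoHat η n j ω)^2 := by
          intro j hj
          exact min_eq_left (key_alg n hn (ρ j) _ _ (hc j hj))
        have hsum_eq : ∑ j ∈ s, hfun ρ η n j ω = ∑ j ∈ s, (ρ j - rhoHat η n j ω)^2 :=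
          Finset.sum_congr rfl heq
        simp only [Set.mem_setOf_eq]
        rw [hsum_eq]
        linarith
      · left
        push_neg at hc
        obtain ⟨j, hj, hgt⟩ := hc
        exact Set.mem_biUnion hj hgt
    -- per-coordinate Chebyshev bound
    have hcheb : ∀ j ∈ s, P {ω | (1:ℝ)/4 < (Ufun η n j ω)^2}
        ≤ ENNReal.ofReal (4 * (S/n)) := by
      intro j hj
      have h1 := markov_aux P (fun ω => (Ufun η n j ω)^2) (fun ω => sq_nonneg _)
        (hA41int n j hn (hjmem j hj)) (by norm_num : (0:ℝ) < 1/4)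
      refine h1.trans (ENNReal.ofReal_le_ofReal ?_)
      have h2 : ∫ ω, (Ufun η n j ω)^2 ∂P ≤ S / n :=
        le_trans (hA41 n j hn (hjmem j hj))
          (div_le_div_of_nonneg_right (hK1S j (hjmem j hj)) hnp.le)
      have h3 : ((1:ℝ)/4)⁻¹ = 4 := by norm_num
      rw [h3]
      have h4 : 0 ≤ ∫ ω, (Ufun η n j ω)^2 ∂P := integral_nonneg fun ω => sq_nonneg _
      linarith
    -- Markov bound for the sum
    have hmark : P {ω | ε/2 < ∑ j ∈ s, hfun ρ η n j ω}
        ≤ ENNReal.ofReal ((2/ε)*(8*(M+1)*S)*((k n : ℝ)/n)) := by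
      have hint : Integrable (fun ω => ∑ j ∈ s, hfun ρ η n j ω) P :=
        integrable_finset_sum s (fun j hj => hhint n j hn (hjmem j hj))
      have h1 := markov_aux P (fun ω => ∑ j ∈ s, hfun ρ η n j ω)
        (fun ω => Finset.sum_nonneg fun j _ => hhnn n j ω) hint (by positivity : (0:ℝ) < ε/2)
      refine h1.trans (ENNReal.ofReal_le_ofReal ?_)
      have h2 : ∫ ω, ∑ j ∈ s, hfun ρ η n j ω ∂P = ∑ j ∈ s, ∫ ω, hfun ρ η n j ω ∂P :=
        integral_finset_sum s (fun j hj => hhint n j hn (hjmem j hj))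
      have h3 : ∑ j ∈ s, ∫ ω, hfun ρ η n j ω ∂P ≤ (k n : ℝ) * (8*(M+1)*S/n) := by
        calc ∑ j ∈ s, ∫ ω, hfun ρ η n j ω ∂P
            ≤ ∑ _j ∈ s, 8*(M+1)*S/n :=
              Finset.sum_le_sum fun j hj => hhIb n j hn (hjmem j hj)
          _ = (s.card : ℝ) * (8*(M+1)*S/n) := by rw [Finset.sum_const, nsmul_eq_mul]
          _ = (k n : ℝ) * (8*(M+1)*S/n) := by rw [hs, Nat.card_Icc]; norm_num
      have h4 : (ε/2)⁻¹ = 2/ε := by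
        field_simp
      rw [h4, h2]
      have h5 : (2/ε) * (∑ j ∈ s, ∫ ω, hfun ρ η n j ω ∂P)
          ≤ (2/ε) * ((k n : ℝ) * (8*(M+1)*S/n)) :=
        mul_le_mul_of_nonneg_left h3 (by positivity)
      have h6 : (2/ε) * ((k n : ℝ) * (8*(M+1)*S/n)) = (2/ε)*(8*(M+1)*S)*((k n : ℝ)/n) := by
        ring
      linarith
    -- sum the coordinatewise bounds
    have hunion : P (⋃ j ∈ s, {ω | (1:ℝ)/4 < (Ufun η n j ω)^2})
        ≤ ENNReal.ofReal (4*S*((k n : ℝ)/n)) := by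
      calc P (⋃ j ∈ s, {ω | (1:ℝ)/4 < (Ufun η n j ω)^2})
          ≤ ∑ j ∈ s, P {ω | (1:ℝ)/4 < (Ufun η n j ω)^2} := measure_biUnion_finset_le s _
        _ ≤ ∑ _j ∈ s, ENNReal.ofReal (4 * (S/n)) := Finset.sum_le_sum hcheb
        _ = (s.card : ENNReal) * ENNReal.ofReal (4 * (S/n)) := by
            rw [Finset.sum_const, nsmul_eq_mul]
        _ = ENNReal.ofReal ((s.card : ℝ) * (4 * (S/n))) := by
            rw [← ENNReal.ofReal_natCast s.card, ← ENNReal.ofReal_mul (Nat.cast_nonneg _)]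
        _ ≤ ENNReal.ofReal (4*S*((k n : ℝ)/n)) := by
            refine ENNReal.ofReal_le_ofReal ?_
            have : (s.card : ℝ) = (k n : ℝ) := by rw [hs, Nat.card_Icc]; norm_num
            rw [this]
            have : (k n : ℝ) * (4 * (S/n)) = 4*S*((k n : ℝ)/n) := by ring
            linarith [this.le]
    calc P {ω | ε < (∑ j ∈ s, (ρ j - rhoHat η n j ω) ^ 2) + ∑' j : ℕ, ρ (k n + 1 + j) ^ 2}
        ≤ P ((⋃ j ∈ s, {ω | (1:ℝ)/4 < (Ufun η n j ω)^2})
          ∪ {ω | ε/2 < ∑ j ∈ s, hfun ρ η n j ω}) := measure_mono hsub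
      _ ≤ P (⋃ j ∈ s, {ω | (1:ℝ)/4 < (Ufun η n j ω)^2})
          + P {ω | ε/2 < ∑ j ∈ s, hfun ρ η n j ω} := measure_union_le _ _
      _ ≤ _ := add_le_add hunion hmark
  -- the deterministic bound tends to 0
  have hkd : Tendsto (fun n : ℕ => (k n : ℝ) / n) atTop (nhds 0) :=
    kn_div_tendsto_zero C hCpos hCmono hCsum k hk hA3
  have hlim : Tendsto (fun n : ℕ => ENNReal.ofReal (4*S*((k n : ℝ)/n))
      + ENNReal.ofReal ((2/ε)*(8*(M+1)*S)*((k n : ℝ)/n))) atTop (nhds 0) := by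
    have l1 : Tendsto (fun n : ℕ => 4*S*((k n : ℝ)/n)) atTop (nhds 0) := by
      have := hkd.const_mul (4*S)
      simpa using this
    have l2 : Tendsto (fun n : ℕ => (2/ε)*(8*(M+1)*S)*((k n : ℝ)/n)) atTop (nhds 0) := by
      have := hkd.const_mul ((2/ε)*(8*(M+1)*S))
      simpa using this
    have e1 : Tendsto (fun n : ℕ => ENNReal.ofReal (4*S*((k n : ℝ)/n))) atTop (nhds 0) := by
      have := ENNReal.tendsto_ofReal l1
      simpa using this
    have e2 : Tendsto (fun n : ℕ => ENNReal.ofReal ((2/ε)*(8*(M+1)*S)*((k n : ℝ)/n)))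
        atTop (nhds 0) := by
      have := ENNReal.tendsto_ofReal l2
      simpa using this
    have := e1.add e2
    simpa using this
  have htailT : Tendsto (fun n : ℕ => ∑' j : ℕ, ρ (k n + 1 + j)^2) atTop (nhds 0) := by
    have h := (tendsto_sum_nat_add (fun j : ℕ => ρ (j+1)^2)).comp hk
    convert h using 2 with n
    exact tsum_congr fun j => by rw [show k n + 1 + j = j + k n + 1 from by omega]
  have hev : ∀ᶠ n : ℕ in atTop,
      P {ω | ε < (∑ j ∈ Finset.Icc 1 (k n), (ρ j - rhoHat η n j ω) ^ 2)
                    + ∑' j : ℕ, ρ (k n + 1 + j) ^ 2}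
        ≤ ENNReal.ofReal (4*S*((k n : ℝ)/n))
          + ENNReal.ofReal ((2/ε)*(8*(M+1)*S)*((k n : ℝ)/n)) := by
    filter_upwards [eventually_ge_atTop 2,
      (tendsto_order.1 htailT).2 (ε/2) (by positivity)] with n hn htl
    exact key n hn htl.le
  refine tendsto_of_tendsto_of_tendsto_of_le_of_le' tendsto_const_nhds hlim
    (Eventually.of_forall fun n => zero_le) hev
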